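/- Suppose there exists A ≥ 0 with d(θ,θ') ≤ √n · A · ‖θ − θ'‖₂ for all θ, θ' ∈ Θ. Fix λ ∈ ℝ^{2l} with ‖λ‖₁ ≤ M and let V = {e₁,…,e_{2l}} ⊂ ℝˡ, where (eᵢ)_j = δ_{ij} for i ≤ l and eᵢ = −e_{2l−i+1} for i > l. Let Y₁,…,Y_k be i.i.d. random vectors with P(Yᵢ = e_j) = |λ_j|/M for j = 1,…,2l and P(Yᵢ = 0⃗) = 1 − Σ_{j=1}^{2l} |λ_j|/M, and set Ȳ_k := (1/k)·Σ_{i=1}^k Yᵢ. Then E[ d(M·Ȳ_k, M·E Y₁)² ] ≤ 4·n·A²·M² / k. -/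

import Mathlib

open MeasureTheory ProbabilityTheory Real ENNReal

/-- The probabilistic covering construction of Section 2.2 (following Carl): for
`Θ = {θ : ‖θ‖₁ ≤ M}` with contraction constant `A`, fixed `λ ∈ ℝ^{2l}` with
`‖λ‖₁ ≤ M`, the vertices `e₁,…,e_{2l}` (`(eᵢ)_j = δ_{ij}` for `i ≤ l`,
`eᵢ = −e_{2l−i+1}` for `i > l`), and i.i.d. random vectors `Y₁,…,Y_k ∈ V ∪ {0}` with
`P(Yᵢ = e_j) = |λ_j|/M` and `P(Yᵢ = 0) = 1 − Σ_j |λ_j|/M`, the empirical mean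
`Ȳ_k = k⁻¹ Σ Yᵢ` satisfies `E[d(M Ȳ_k, M E Y₁)²] ≤ 4 n A² M² / k`. -/
theorem mean_squared_distance_empirical_mean
    (n l : ℕ) (hn : 0 < n) (hl : 0 < l) (M : ℝ) (hM : 0 < M)
    (𝔛 : Type*) (x : Fin n → 𝔛) (φ : (Fin l → ℝ) → 𝔛 → ℝ)
    (A : ℝ) (hA : 0 ≤ A)
    (hcontr : ∀ θ θ' : Fin l → ℝ, (∑ j, |θ j|) ≤ M → (∑ j, |θ' j|) ≤ M →
      Real.sqrt (∑ i, (φ θ (x i) - φ θ' (x i))^2)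
        ≤ Real.sqrt n * A * Real.sqrt (∑ j, (θ j - θ' j)^2))
    (lam : Fin (2 * l) → ℝ) (hlam : (∑ j, |lam j|) ≤ M)
    (e : Fin (2 * l) → Fin l → ℝ)
    (he : ∀ (i : Fin (2 * l)) (j : Fin l),
      e i j = if (i : ℕ) < l then (if (i : ℕ) = (j : ℕ) then 1 else 0)
              else (if 2 * l - 1 - (i : ℕ) = (j : ℕ) then -1 else 0))
    (k : ℕ) (hk : 0 < k)
    (Ω : Type*) (mΩ : MeasurableSpace Ω) (μ : Measure Ω) (hμ : IsProbabilityMeasure μ)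
    (Y : Fin k → Ω → (Fin l → ℝ))
    (hYmeas : ∀ i, Measurable (Y i))
    (hYrange : ∀ i ω, Y i ω = 0 ∨ ∃ j, Y i ω = e j)
    (hYlaw : ∀ (i : Fin k) (j : Fin (2 * l)),
      μ {ω | Y i ω = e j} = ENNReal.ofReal (|lam j| / M))
    (hYzero : ∀ i : Fin k,
      μ {ω | Y i ω = 0} = ENNReal.ofReal (1 - ∑ j, |lam j| / M))
    (hYindep : iIndepFun Y μ) :
    (∫ ω, (Real.sqrt (∑ i,
        (φ (fun j' => M * ((1 / (k : ℝ)) * ∑ i' : Fin k, Y i' ω j')) (x i)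
          - φ (fun j' => M * ∫ ω', Y ⟨0, hk⟩ ω' j' ∂μ) (x i))^2))^2 ∂μ)
      ≤ 4 * n * A^2 * M^2 / k := by
  classical
  have hk' : (0:ℝ) < k := Nat.cast_pos.mpr hk
  set m : Fin l → ℝ := fun j => ∫ ω', Y ⟨0, hk⟩ ω' j ∂μ with hmdef
  -- structure of the vertices e
  have he' : ∀ jj : Fin (2*l), ∃ t : Fin l, ∃ s : ℝ,
      ((s = 1 ∧ (jj:ℕ) < l ∧ (t:ℕ) = jj) ∨ (s = -1 ∧ ¬ (jj:ℕ) < l ∧ (t:ℕ) = 2*l-1-jj)) ∧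
      ∀ j : Fin l, e jj j = if j = t then s else 0 := by
    intro jj
    by_cases hcase : (jj:ℕ) < l
    · refine ⟨⟨jj, hcase⟩, 1, Or.inl ⟨rfl, hcase, rfl⟩, fun j => ?_⟩
      rw [he, if_pos hcase]
      by_cases hj : j = ⟨jj, hcase⟩
      · subst hj; simp
      · rw [if_neg, if_neg hj]
        intro h; exact hj (Fin.ext h.symm)
    · have hlt := jj.isLt
      have h1 : 2*l-1-(jj:ℕ) < l := by omega
      refine ⟨⟨2*l-1-jj, h1⟩, -1, Or.inr ⟨rfl, hcase, rfl⟩, fun j => ?_⟩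
      rw [he, if_neg hcase]
      by_cases hj : j = ⟨2*l-1-jj, h1⟩
      · subst hj; simp
      · rw [if_neg, if_neg hj]
        intro h; exact hj (Fin.ext h.symm)
  choose t s hts hee using he'
  have hs_abs : ∀ jj, |s jj| = 1 := by
    intro jj; rcases hts jj with ⟨h, -⟩ | ⟨h, -⟩ <;> rw [h] <;> norm_num
  have hs_ne : ∀ jj, s jj ≠ 0 := by
    intro jj h; have := hs_abs jj; rw [h] at this; norm_num at this
  have hsum_abs : ∀ jj, (∑ j, |e jj j|) = 1 := by
    intro jj
    have : ∀ j : Fin l, |e jj j| = if j = t jj then 1 else 0 := by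
      intro j; rw [hee]
      by_cases hj : j = t jj
      · rw [if_pos hj, if_pos hj, hs_abs]
      · rw [if_neg hj, if_neg hj, abs_zero]
    simp [this]
  have hsum_sq : ∀ jj, (∑ j, (e jj j)^2) = 1 := by
    intro jj
    have : ∀ j : Fin l, (e jj j)^2 = if j = t jj then 1 else 0 := by
      intro j; rw [hee]
      by_cases hj : j = t jj
      · rw [if_pos hj, if_pos hj, ← sq_abs, hs_abs]; norm_num
      · rw [if_neg hj, if_neg hj]; norm_num
    simp [this]
  have he_ne : ∀ jj, e jj ≠ 0 := by
    intro jj h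
    have := hee jj (t jj)
    rw [h] at this
    simp at this
    exact hs_ne jj this.symm
  have he_inj : Function.Injective e := by
    intro a b hab
    have h1 : e a (t a) = s a := by rw [hee, if_pos rfl]
    have h2 : e b (t a) = if t a = t b then s b else 0 := hee b (t a)
    rw [hab, h2] at h1
    by_cases htt : t a = t b
    · rw [if_pos htt] at h1
      have hta := a.isLt; have htb := b.isLt
      have htval : (t a : ℕ) = (t b : ℕ) := by rw [htt]
      rcases hts a with ⟨ha1, ha2, ha3⟩ | ⟨ha1, ha2, ha3⟩ <;>
        rcases hts b with ⟨hb1, hb2, hb3⟩ | ⟨hb1, hb2, hb3⟩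
      · exact Fin.ext (by omega)
      · rw [ha1, hb1] at h1; norm_num at h1
      · rw [ha1, hb1] at h1; norm_num at h1
      · exact Fin.ext (by omega)
    · rw [if_neg htt] at h1; exact absurd h1.symm (hs_ne a)
  -- basic bounds on Y
  have hY1 : ∀ i ω, (∑ j, |Y i ω j|) ≤ 1 := by
    intro i ω
    rcases hYrange i ω with h | ⟨jj, h⟩
    · simp [h]
    · simp only [h]; rw [hsum_abs]
  have hYsq1 : ∀ i ω, (∑ j, (Y i ω j)^2) ≤ 1 := by
    intro i ω
    rcases hYrange i ω with h | ⟨jj, h⟩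
    · simp [h]
    · simp only [h]; rw [hsum_sq]
  have hYabs : ∀ i ω j, |Y i ω j| ≤ 1 := by
    intro i ω j
    exact le_trans (Finset.single_le_sum (f := fun j => |Y i ω j|)
      (fun _ _ => abs_nonneg _) (Finset.mem_univ j)) (hY1 i ω)
  have hZmeas : ∀ (i : Fin k) (j : Fin l), Measurable fun ω => Y i ω j :=
    fun i j => (measurable_pi_apply j).comp (hYmeas i)
  have hZint : ∀ (i : Fin k) (j : Fin l), Integrable (fun ω => Y i ω j) μ := by
    intro i j
    exact ⟨(hZmeas i j).aestronglyMeasurable,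
      HasFiniteIntegral.of_bounded (C := 1)
        (ae_of_all _ fun ω => by simpa [Real.norm_eq_abs] using hYabs i ω j)⟩
  have hZsqint : ∀ (i : Fin k) (j : Fin l), Integrable (fun ω => (Y i ω j)^2) μ := by
    intro i j
    refine ⟨((hZmeas i j).pow_const 2).aestronglyMeasurable,
      HasFiniteIntegral.of_bounded (C := 1) (ae_of_all _ fun ω => ?_)⟩
    rw [Real.norm_eq_abs, abs_of_nonneg (sq_nonneg _), ← sq_abs]
    exact pow_le_one₀ (abs_nonneg _) (hYabs i ω j)
  -- indicator representation and expectation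
  have hpreim : ∀ (i : Fin k) (jj : Fin (2*l)), MeasurableSet {ω | Y i ω = e jj} := by
    intro i jj
    exact hYmeas i (measurableSet_singleton (e jj))
  have hrep : ∀ (i : Fin k) ω (j : Fin l),
      Y i ω j = ∑ jj, e jj j * (if Y i ω = e jj then 1 else 0) := by
    intro i ω j
    rcases hYrange i ω with h | ⟨j₀, h⟩
    · simp only [h, Pi.zero_apply]
      rw [eq_comm, Finset.sum_eq_zero]
      intro jj _
      rw [if_neg (fun hc => he_ne jj hc.symm), mul_zero]
    · simp only [h]
      rw [eq_comm, Finset.sum_eq_single j₀]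
      · simp
      · intro jj _ hjj
        simp only [if_neg (fun hc => hjj (he_inj hc).symm), mul_zero]
      · intro hmem; exact absurd (Finset.mem_univ j₀) hmem
  have hindint : ∀ (i : Fin k) (jj : Fin (2*l)),
      Integrable (fun ω => if Y i ω = e jj then (1:ℝ) else 0) μ := by
    intro i jj
    have : (fun ω => if Y i ω = e jj then (1:ℝ) else 0)
        = Set.indicator {ω | Y i ω = e jj} (fun _ => (1:ℝ)) := by
      funext ω; simp [Set.indicator_apply]
    rw [this]
    exact (integrable_const (1:ℝ)).indicator (hpreim i jj)
  have hmean : ∀ (i : Fin k) (j : Fin l),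
      (∫ ω, Y i ω j ∂μ) = ∑ jj, e jj j * (|lam jj| / M) := by
    intro i j
    rw [show (fun ω => Y i ω j) = fun ω => ∑ jj, e jj j * (if Y i ω = e jj then 1 else 0)
      from funext fun ω => hrep i ω j]
    rw [integral_finset_sum _ (fun jj _ => (hindint i jj).const_mul _)]
    refine Finset.sum_congr rfl fun jj _ => ?_
    rw [integral_const_mul]
    congr 1
    have : (fun ω => if Y i ω = e jj then (1:ℝ) else 0)
        = Set.indicator {ω | Y i ω = e jj} (fun _ => (1:ℝ)) := by
      funext ω; simp [Set.indicator_apply]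
    rw [this, integral_indicator_const _ (hpreim i jj), Measure.real, hYlaw, smul_eq_mul, mul_one,
      ENNReal.toReal_ofReal (div_nonneg (abs_nonneg _) hM.le)]
  have hmean_m : ∀ (i : Fin k) (j : Fin l), (∫ ω, Y i ω j ∂μ) = m j := by
    intro i j
    rw [hmean i j, hmdef]
    exact (hmean ⟨0, hk⟩ j).symm
  -- bounds on m
  have hm_abs : ∀ j, |m j| ≤ ∫ ω, |Y ⟨0, hk⟩ ω j| ∂μ := by
    intro j
    simpa [Real.norm_eq_abs] using
      norm_integral_le_integral_norm (μ := μ) (fun ω => Y ⟨0, hk⟩ ω j)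
  have hm1 : (∑ j, |m j|) ≤ 1 := by
    have h1 : (∑ j, |m j|) ≤ ∑ j, ∫ ω, |Y ⟨0, hk⟩ ω j| ∂μ :=
      Finset.sum_le_sum fun j _ => hm_abs j
    have h2 : (∑ j, ∫ ω, |Y ⟨0, hk⟩ ω j| ∂μ) = ∫ ω, ∑ j, |Y ⟨0, hk⟩ ω j| ∂μ :=
      (integral_finset_sum _ (fun j _ => (hZint ⟨0, hk⟩ j).abs)).symm
    have h3 : (∫ ω, ∑ j, |Y ⟨0, hk⟩ ω j| ∂μ) ≤ ∫ (_ : Ω), (1:ℝ) ∂μ := by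
      refine integral_mono ?_ (integrable_const 1) (fun ω => hY1 _ ω)
      exact integrable_finset_sum _ (fun j _ => (hZint ⟨0, hk⟩ j).abs)
    rw [integral_const, probReal_univ, one_smul] at h3
    linarith
  have hm_le1 : ∀ j, |m j| ≤ 1 := fun j =>
    le_trans (Finset.single_le_sum (f := fun j => |m j|) (fun _ _ => abs_nonneg _)
      (Finset.mem_univ j)) hm1
  -- integrability of centered variables
  have hWint : ∀ (i : Fin k) (j : Fin l), Integrable (fun ω => Y i ω j - m j) μ :=
    fun i j => (hZint i j).sub (integrable_const _)
  have hWprodint : ∀ (i i' : Fin k) (j : Fin l),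
      Integrable (fun ω => (Y i ω j - m j) * (Y i' ω j - m j)) μ := by
    intro i i' j
    refine ⟨(((hZmeas i j).sub measurable_const).mul
      ((hZmeas i' j).sub measurable_const)).aestronglyMeasurable,
      HasFiniteIntegral.of_bounded (C := 4) (ae_of_all _ fun ω => ?_)⟩
    rw [Real.norm_eq_abs, abs_mul]
    have b1 : |Y i ω j - m j| ≤ 2 :=
      (abs_sub _ _).trans (by linarith [hYabs i ω j, hm_le1 j])
    have b2 : |Y i' ω j - m j| ≤ 2 :=
      (abs_sub _ _).trans (by linarith [hYabs i' ω j, hm_le1 j])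
    nlinarith [abs_nonneg (Y i ω j - m j), abs_nonneg (Y i' ω j - m j)]
  have hWmean : ∀ (i : Fin k) (j : Fin l), (∫ ω, (Y i ω j - m j) ∂μ) = 0 := by
    intro i j
    rw [integral_sub (hZint i j) (integrable_const _), hmean_m, integral_const,
      probReal_univ, one_smul, sub_self]
  -- cross terms vanish
  have hcross : ∀ (j : Fin l) (i i' : Fin k), i ≠ i' →
      (∫ ω, (Y i ω j - m j) * (Y i' ω j - m j) ∂μ) = 0 := by
    intro j i i' hii'
    have hf : Measurable (fun v : Fin l → ℝ => v j - m j) :=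
      (measurable_pi_apply j).sub measurable_const
    have hind : IndepFun (fun ω => Y i ω j - m j) (fun ω => Y i' ω j - m j) μ :=
      (hYindep.indepFun hii').comp hf hf
    have := hind.integral_mul_eq_mul_integral (hWint i j).1 (hWint i' j).1
    rw [show ((fun ω => Y i ω j - m j) * fun ω => Y i' ω j - m j)
      = fun ω => (Y i ω j - m j) * (Y i' ω j - m j) from rfl] at this
    rw [this, hWmean, zero_mul]
  -- diagonal terms
  have hdiag : ∀ (i : Fin k) (j : Fin l),
      (∫ ω, (Y i ω j - m j)^2 ∂μ) ≤ ∫ ω, (Y i ω j)^2 ∂μ := by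
    intro i j
    have hexp : (fun ω => (Y i ω j - m j)^2)
        = fun ω => ((Y i ω j)^2 - (2 * m j) * Y i ω j + (m j)^2) := by
      funext ω; ring
    have hint2 : Integrable (fun ω => (2 * m j) * Y i ω j) μ := (hZint i j).const_mul _
    have hint1 : Integrable (fun ω => (Y i ω j)^2 - (2 * m j) * Y i ω j) μ :=
      (hZsqint i j).sub hint2
    rw [hexp, integral_add hint1 (integrable_const _),
      integral_sub (hZsqint i j) hint2, integral_const_mul, hmean_m,
      integral_const, probReal_univ, one_smul]
    nlinarith [sq_nonneg (m j)]
  -- key second moment bound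
  have key : (∫ ω, (∑ j, ((1 / (k : ℝ)) * (∑ i' : Fin k, Y i' ω j) - m j)^2) ∂μ)
      ≤ 1 / (k : ℝ) := by
    have hptw : ∀ ω (j : Fin l), (1 / (k : ℝ)) * (∑ i' : Fin k, Y i' ω j) - m j
        = (1 / (k : ℝ)) * ∑ i' : Fin k, (Y i' ω j - m j) := by
      intro ω j
      rw [Finset.sum_sub_distrib, Finset.sum_const, Finset.card_univ, Fintype.card_fin]
      field_simp
      try ring
    have hsq : ∀ ω (j : Fin l), ((1 / (k : ℝ)) * (∑ i' : Fin k, Y i' ω j) - m j)^2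
        = (1 / (k : ℝ)^2) * ∑ i : Fin k, ∑ i' : Fin k, (Y i ω j - m j) * (Y i' ω j - m j) := by
      intro ω j
      rw [hptw, mul_pow, ← Finset.sum_mul_sum]
      ring
    calc (∫ ω, (∑ j, ((1 / (k : ℝ)) * (∑ i' : Fin k, Y i' ω j) - m j)^2) ∂μ)
        = ∑ j, (1 / (k : ℝ)^2) * ∑ i : Fin k, ∑ i' : Fin k,
            ∫ ω, (Y i ω j - m j) * (Y i' ω j - m j) ∂μ := by
          rw [show (fun ω => (∑ j, ((1 / (k : ℝ)) * (∑ i' : Fin k, Y i' ω j) - m j)^2))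
            = fun ω => ∑ j, (1 / (k : ℝ)^2) * ∑ i : Fin k, ∑ i' : Fin k,
                (Y i ω j - m j) * (Y i' ω j - m j) from funext fun ω => by
              exact Finset.sum_congr rfl fun j _ => hsq ω j]
          rw [integral_finset_sum _ (fun j _ => ((integrable_finset_sum _ (fun i _ =>
            integrable_finset_sum _ (fun i' _ => hWprodint i i' j))).const_mul _))]
          refine Finset.sum_congr rfl fun j _ => ?_
          rw [integral_const_mul, integral_finset_sum _ (fun i _ =>
            integrable_finset_sum _ (fun i' _ => hWprodint i i' j))]
          congr 1
          refine Finset.sum_congr rfl fun i _ => ?_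
          rw [integral_finset_sum _ (fun i' _ => hWprodint i i' j)]
      _ = ∑ j, (1 / (k : ℝ)^2) * ∑ i : Fin k, ∫ ω, (Y i ω j - m j)^2 ∂μ := by
          refine Finset.sum_congr rfl fun j _ => ?_
          congr 1
          refine Finset.sum_congr rfl fun i _ => ?_
          rw [Finset.sum_eq_single i]
          · congr 1; funext ω; ring
          · intro i' _ hi'; exact hcross j i i' (Ne.symm hi')
          · intro hmem; exact absurd (Finset.mem_univ i) hmem
      _ ≤ ∑ j, (1 / (k : ℝ)^2) * ∑ i : Fin k, ∫ ω, (Y i ω j)^2 ∂μ := by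
          refine Finset.sum_le_sum fun j _ => ?_
          refine mul_le_mul_of_nonneg_left ?_ (by positivity)
          exact Finset.sum_le_sum fun i _ => hdiag i j
      _ = (1 / (k : ℝ)^2) * ∑ i : Fin k, ∫ ω, (∑ j, (Y i ω j)^2) ∂μ := by
          rw [← Finset.mul_sum, Finset.sum_comm]
          congr 1
          refine Finset.sum_congr rfl fun i _ => ?_
          rw [integral_finset_sum _ (fun j _ => hZsqint i j)]
      _ ≤ (1 / (k : ℝ)^2) * ∑ i : Fin k, (1:ℝ) := by
          refine mul_le_mul_of_nonneg_left ?_ (by positivity)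
          refine Finset.sum_le_sum fun i _ => ?_
          have h3 : (∫ ω, (∑ j, (Y i ω j)^2) ∂μ) ≤ ∫ (_ : Ω), (1:ℝ) ∂μ := by
            refine integral_mono (integrable_finset_sum _ (fun j _ => hZsqint i j))
              (integrable_const 1) (fun ω => hYsq1 i ω)
          rwa [integral_const, probReal_univ, one_smul] at h3
      _ = 1 / (k : ℝ) := by
          rw [Finset.sum_const, Finset.card_univ, Fintype.card_fin, nsmul_eq_mul, mul_one]
          field_simp
          try ring
  -- sum of squares vs square of l1 norm
  have hsumsq_le : ∀ (f : Fin l → ℝ), (∑ j, (f j)^2) ≤ (∑ j, |f j|)^2 := by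
    intro f
    calc (∑ j, (f j)^2) = ∑ j, |f j| * |f j| := by
          refine Finset.sum_congr rfl fun j _ => ?_
          rw [← sq_abs, sq]
      _ ≤ ∑ j, |f j| * (∑ j', |f j'|) := by
          refine Finset.sum_le_sum fun j _ => ?_
          exact mul_le_mul_of_nonneg_left (Finset.single_le_sum
            (f := fun j' => |f j'|) (fun _ _ => abs_nonneg _) (Finset.mem_univ j))
            (abs_nonneg _)
      _ = (∑ j, |f j|)^2 := by rw [← Finset.sum_mul]; ring
  -- l1 bound for the empirical mean
  have hYbar1 : ∀ ω, (∑ j, |(1 / (k : ℝ)) * ∑ i' : Fin k, Y i' ω j|) ≤ 1 := by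
    intro ω
    have : ∀ j : Fin l, |(1 / (k : ℝ)) * ∑ i' : Fin k, Y i' ω j|
        ≤ (1 / (k : ℝ)) * ∑ i' : Fin k, |Y i' ω j| := by
      intro j
      rw [abs_mul, abs_of_pos (by positivity : (0:ℝ) < 1 / (k:ℝ))]
      exact mul_le_mul_of_nonneg_left (Finset.abs_sum_le_sum_abs _ _) (by positivity)
    calc (∑ j, |(1 / (k : ℝ)) * ∑ i' : Fin k, Y i' ω j|)
        ≤ ∑ j, (1 / (k : ℝ)) * ∑ i' : Fin k, |Y i' ω j| :=
          Finset.sum_le_sum fun j _ => this j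
      _ = (1 / (k : ℝ)) * ∑ i' : Fin k, ∑ j, |Y i' ω j| := by
          rw [← Finset.mul_sum, Finset.sum_comm]
      _ ≤ (1 / (k : ℝ)) * ∑ i' : Fin k, (1:ℝ) := by
          refine mul_le_mul_of_nonneg_left (Finset.sum_le_sum fun i' _ => hY1 i' ω)
            (by positivity)
      _ = 1 := by
          rw [Finset.sum_const, Finset.card_univ, Fintype.card_fin, nsmul_eq_mul, mul_one]
          field_simp
          try ring
  -- pointwise bound on the integrand
  have hptbound : ∀ ω, (Real.sqrt (∑ i,
        (φ (fun j' => M * ((1 / (k : ℝ)) * ∑ i' : Fin k, Y i' ω j')) (x i)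
          - φ (fun j' => M * ∫ ω', Y ⟨0, hk⟩ ω' j' ∂μ) (x i))^2))^2
      ≤ (n * A^2 * M^2) * ∑ j, ((1 / (k : ℝ)) * (∑ i' : Fin k, Y i' ω j) - m j)^2 := by
    intro ω
    set θ : Fin l → ℝ := fun j' => M * ((1 / (k : ℝ)) * ∑ i' : Fin k, Y i' ω j') with hθ
    set θ' : Fin l → ℝ := fun j' => M * ∫ ω', Y ⟨0, hk⟩ ω' j' ∂μ with hθ'
    have h1 : (∑ j, |θ j|) ≤ M := by
      have : ∀ j : Fin l, |θ j| = M * |(1 / (k : ℝ)) * ∑ i' : Fin k, Y i' ω j| := by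
        intro j; rw [hθ]; rw [abs_mul, abs_of_pos hM]
      calc (∑ j, |θ j|) = M * ∑ j, |(1 / (k : ℝ)) * ∑ i' : Fin k, Y i' ω j| := by
            rw [Finset.mul_sum]; exact Finset.sum_congr rfl fun j _ => this j
        _ ≤ M * 1 := mul_le_mul_of_nonneg_left (hYbar1 ω) hM.le
        _ = M := mul_one M
    have h2 : (∑ j, |θ' j|) ≤ M := by
      have : ∀ j : Fin l, |θ' j| = M * |m j| := by
        intro j; rw [hθ']; rw [abs_mul, abs_of_pos hM]
      calc (∑ j, |θ' j|) = M * ∑ j, |m j| := by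
            rw [Finset.mul_sum]; exact Finset.sum_congr rfl fun j _ => this j
        _ ≤ M * 1 := mul_le_mul_of_nonneg_left hm1 hM.le
        _ = M := mul_one M
    have hc := hcontr θ θ' h1 h2
    have hθm : ∀ j : Fin l, θ j = M * ((1 / (k : ℝ)) * ∑ i' : Fin k, Y i' ω j) :=
      fun j => rfl
    have hθ'm : ∀ j : Fin l, θ' j = M * m j := fun j => rfl
    have hdiff : (∑ j, (θ j - θ' j)^2)
        = M^2 * ∑ j, ((1 / (k : ℝ)) * (∑ i' : Fin k, Y i' ω j) - m j)^2 := by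
      rw [Finset.mul_sum]
      refine Finset.sum_congr rfl fun j _ => ?_
      rw [hθm, hθ'm]
      ring
    set T : ℝ := ∑ j, ((1 / (k : ℝ)) * (∑ i' : Fin k, Y i' ω j) - m j)^2 with hT
    have hT0 : 0 ≤ T := Finset.sum_nonneg fun j _ => sq_nonneg _
    have hS0 : 0 ≤ ∑ i, (φ θ (x i) - φ θ' (x i))^2 :=
      Finset.sum_nonneg fun i _ => sq_nonneg _
    rw [Real.sq_sqrt hS0]
    have hrhs : (Real.sqrt n * A * Real.sqrt (∑ j, (θ j - θ' j)^2))^2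
        = (n * A^2 * M^2) * T := by
      rw [hdiff, mul_pow, mul_pow, Real.sq_sqrt (Nat.cast_nonneg n),
        Real.sq_sqrt (by positivity : (0:ℝ) ≤ M^2 * T)]
      ring
    calc (∑ i, (φ θ (x i) - φ θ' (x i))^2)
        = (Real.sqrt (∑ i, (φ θ (x i) - φ θ' (x i))^2))^2 := (Real.sq_sqrt hS0).symm
      _ ≤ (Real.sqrt n * A * Real.sqrt (∑ j, (θ j - θ' j)^2))^2 := by
          refine pow_le_pow_left₀ (Real.sqrt_nonneg _) hc 2
      _ = (n * A^2 * M^2) * T := hrhs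
  -- the upper bound function is integrable
  have hTmeas : Measurable (fun ω => ∑ j, ((1 / (k : ℝ)) * (∑ i' : Fin k, Y i' ω j) - m j)^2) := by
    refine Finset.measurable_sum _ fun j _ => ?_
    exact ((measurable_const.mul (Finset.measurable_sum _ fun i _ =>
      hZmeas i j)).sub measurable_const).pow_const 2
  have hTbound : ∀ ω, (∑ j, ((1 / (k : ℝ)) * (∑ i' : Fin k, Y i' ω j) - m j)^2) ≤ 4 := by
    intro ω
    have hb : ∀ j : Fin l, ((1 / (k : ℝ)) * (∑ i' : Fin k, Y i' ω j) - m j)^2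
        ≤ 2 * ((1 / (k : ℝ)) * (∑ i' : Fin k, Y i' ω j))^2 + 2 * (m j)^2 := by
      intro j
      nlinarith [sq_nonneg ((1 / (k : ℝ)) * (∑ i' : Fin k, Y i' ω j) + m j)]
    calc (∑ j, ((1 / (k : ℝ)) * (∑ i' : Fin k, Y i' ω j) - m j)^2)
        ≤ ∑ j, (2 * ((1 / (k : ℝ)) * (∑ i' : Fin k, Y i' ω j))^2 + 2 * (m j)^2) :=
          Finset.sum_le_sum fun j _ => hb j
      _ = 2 * (∑ j, ((1 / (k : ℝ)) * (∑ i' : Fin k, Y i' ω j))^2) + 2 * (∑ j, (m j)^2) := by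
          rw [Finset.sum_add_distrib, ← Finset.mul_sum, ← Finset.mul_sum]
      _ ≤ 2 * 1 + 2 * 1 := by
          have hA1 : (∑ j, ((1 / (k : ℝ)) * (∑ i' : Fin k, Y i' ω j))^2) ≤ 1 := by
            refine le_trans (hsumsq_le _) ?_
            have := hYbar1 ω
            nlinarith [Finset.sum_nonneg (fun j (_ : j ∈ Finset.univ) =>
              abs_nonneg ((1 / (k : ℝ)) * ∑ i' : Fin k, Y i' ω j))]
          have hA2 : (∑ j, (m j)^2) ≤ 1 := by
            refine le_trans (hsumsq_le _) ?_
            nlinarith [Finset.sum_nonneg (fun j (_ : j ∈ Finset.univ) => abs_nonneg (m j))]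
          linarith
      _ = 4 := by norm_num
  have hTint : Integrable (fun ω => (n * A^2 * M^2) *
      ∑ j, ((1 / (k : ℝ)) * (∑ i' : Fin k, Y i' ω j) - m j)^2) μ := by
    refine Integrable.const_mul ⟨hTmeas.aestronglyMeasurable,
      HasFiniteIntegral.of_bounded (C := 4) (ae_of_all _ fun ω => ?_)⟩ _
    rw [Real.norm_eq_abs, abs_of_nonneg (Finset.sum_nonneg fun j _ => sq_nonneg _)]
    exact hTbound ω
  -- put it together
  calc (∫ ω, (Real.sqrt (∑ i,
        (φ (fun j' => M * ((1 / (k : ℝ)) * ∑ i' : Fin k, Y i' ω j')) (x i)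
          - φ (fun j' => M * ∫ ω', Y ⟨0, hk⟩ ω' j' ∂μ) (x i))^2))^2 ∂μ)
      ≤ ∫ ω, (n * A^2 * M^2) *
          ∑ j, ((1 / (k : ℝ)) * (∑ i' : Fin k, Y i' ω j) - m j)^2 ∂μ := by
        refine integral_mono_of_nonneg (ae_of_all _ fun ω => sq_nonneg _) hTint
          (ae_of_all _ fun ω => hptbound ω)
    _ = (n * A^2 * M^2) *
          ∫ ω, (∑ j, ((1 / (k : ℝ)) * (∑ i' : Fin k, Y i' ω j) - m j)^2) ∂μ := by
        rw [integral_const_mul]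
    _ ≤ (n * A^2 * M^2) * (1 / (k : ℝ)) := by
        refine mul_le_mul_of_nonneg_left key (by positivity)
    _ ≤ 4 * n * A^2 * M^2 / k := by
        rw [div_eq_mul_one_div (4 * n * A^2 * M^2) (k:ℝ)]
        refine mul_le_mul_of_nonneg_right ?_ (by positivity)
        have hx : (0:ℝ) ≤ (n:ℝ) * A^2 * M^2 := by positivity
        linarith
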